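/- arXiv:2008.11931 — 5 statements merged into one kernel-verified Lean document; each statement's English description precedes it below -/
import Mathlib

section
/- Let l_{q0}, l_q > 0 with l_q ≤ l_{q0}, let T_c ≥ max(l_q, l_{q0}) and u > 0. Let T be uniformly distributed on [−T_c, T_c] and let h(T) be the piecewise collision overlap function: h(T) = (l_{q0} − T)/l_{q0} for l_{q0} − l_q ≤ T ≤ l_{q0}; h(T) = l_q/l_{q0} for 0 ≤ T ≤ l_{q0} − l_q; h(T) = (l_q + T)/l_{q0} for −l_q ≤ T ≤ 0; h(T) = 0 otherwise. Then E[ 1 / (1 + u·h(T)) ] = 1 − (l_{q0} + l_q)/(2 T_c) + (l_{q0}/(T_c u)) · log(1 + u·l_q/l_{q0}) + (l_{q0} − l_q) / (2 T_c (1 + u·l_q/l_{q0})). -/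
open MeasureTheory Set intervalIntegral

lemma int_aff (c d a b : ℝ) (hd : d ≠ 0) (hc : ∀ t ∈ uIcc a b, 0 < c + d*t) :
    ∫ t in a..b, (c + d*t)⁻¹ = (Real.log (c + d*b) - Real.log (c + d*a)) / d := by
  have key : ∀ t ∈ uIcc a b, HasDerivAt (fun t => Real.log (c + d*t) / d) ((c + d*t)⁻¹) t := by
    intro t ht
    have h1 : HasDerivAt (fun t : ℝ => c + d*t) d t := by
      simpa using ((hasDerivAt_id t).const_mul d).const_add c
    have h2 := (Real.hasDerivAt_log (ne_of_gt (hc t ht))).comp t h1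
    have h3 := h2.div_const d
    simpa [mul_comm, mul_div_assoc, ne_of_gt (hc t ht), hd, div_div,
      mul_comm d (c + d*t), mul_inv_cancel_right₀] using h3
  have hcont : IntervalIntegrable (fun t => (c + d*t)⁻¹) volume a b := by
    apply ContinuousOn.intervalIntegrable
    exact (continuousOn_const.add (continuousOn_const.mul continuousOn_id)).inv₀
      (fun t ht => ne_of_gt (hc t ht))
  have := intervalIntegral.integral_eq_sub_of_hasDerivAt key hcont
  rw [this]; ring

lemma contOn_aff (c d a b : ℝ) (l : ℝ) (hc : ∀ t ∈ Icc a b, 0 < c + d*t) :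
    IntegrableOn (fun t => l * (c + d*t)⁻¹) (Ioc a b) := by
  apply IntegrableOn.mono_set _ Ioc_subset_Icc_self
  apply ContinuousOn.integrableOn_Icc
  exact continuousOn_const.mul
    ((continuousOn_const.add (continuousOn_const.mul continuousOn_id)).inv₀
      (fun t ht => ne_of_gt (hc t ht)))

theorem stmt_3 (l0 lq Tc u : ℝ) (hl0 : 0 < l0) (hlq : 0 < lq) (hle : lq ≤ l0)
    (hTc : max lq l0 ≤ Tc) (hu : 0 < u)
    (h : ℝ → ℝ)
    (hdef : ∀ t : ℝ,
      h t = if l0 - lq ≤ t ∧ t ≤ l0 then (l0 - t) / l0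
            else if 0 ≤ t ∧ t ≤ l0 - lq then lq / l0
            else if -lq ≤ t ∧ t ≤ 0 then (lq + t) / l0
            else 0) :
    (1 / (2 * Tc)) * ∫ t in Icc (-Tc) Tc, 1 / (1 + u * h t) =
      1 - (l0 + lq) / (2 * Tc) + (l0 / (Tc * u)) * Real.log (1 + u * lq / l0)
        + (l0 - lq) / (2 * Tc * (1 + u * lq / l0)) := by
  have hlqTc : lq ≤ Tc := le_trans (le_max_left _ _) hTc
  have hl0Tc : l0 ≤ Tc := le_trans (le_max_right _ _) hTc
  have hTc0 : 0 < Tc := lt_of_lt_of_le hl0 hl0Tc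
  have hA : 0 < 1 + u * lq / l0 := by positivity
  set f : ℝ → ℝ := fun t => 1 / (1 + u * h t) with hf
  -- values of h on pieces
  have hv1 : ∀ t ∈ Icc (-Tc) (-lq), h t = 0 := by
    intro t ht; rw [hdef]; obtain ⟨h1, h2⟩ := ht
    split_ifs with c1 c2 c3
    · exfalso; obtain ⟨a1, a2⟩ := c1; linarith
    · exfalso; obtain ⟨a1, a2⟩ := c2; linarith
    · have : t = -lq := le_antisymm h2 c3.1
      rw [this]; ring
    · rfl
  have hv2 : ∀ t ∈ Icc (-lq) (0:ℝ), h t = (lq + t) / l0 := by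
    intro t ht; rw [hdef]; obtain ⟨h1, h2⟩ := ht
    split_ifs with c1 c2 c3
    · have ht0 : t = 0 := le_antisymm h2 (by linarith [c1.1])
      have hll : lq = l0 := by linarith [c1.1]
      rw [ht0, hll]; norm_num
    · have ht0 : t = 0 := le_antisymm h2 c2.1
      rw [ht0]; ring_nf
    · rfl
    · exact absurd ⟨h1, h2⟩ c3
  have hv3 : ∀ t ∈ Icc (0:ℝ) (l0 - lq), h t = lq / l0 := by
    intro t ht; rw [hdef]; obtain ⟨h1, h2⟩ := ht
    split_ifs with c1 c2 c3
    · have : t = l0 - lq := le_antisymm h2 c1.1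
      rw [this]; ring_nf
    · rfl
    · have : t = 0 := le_antisymm c3.2 h1
      rw [this]; try ring_nf
    · exact absurd ⟨h1, h2⟩ c2
  have hv4 : ∀ t ∈ Icc (l0 - lq) l0, h t = (l0 - t) / l0 := by
    intro t ht; rw [hdef]; obtain ⟨h1, h2⟩ := ht
    split_ifs with c1 c2 c3
    · rfl
    all_goals exact absurd ⟨h1, h2⟩ c1
  have hv5 : ∀ t ∈ Icc l0 Tc, h t = 0 := by
    intro t ht; rw [hdef]; obtain ⟨h1, h2⟩ := ht
    split_ifs with c1 c2 c3
    · have : t = l0 := le_antisymm c1.2 h1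
      rw [this]; ring
    · exfalso; linarith [c2.2]
    · exfalso; linarith [c3.2]
    · rfl
  -- f on pieces
  have he1 : EqOn f (fun _ => (1:ℝ)) (Icc (-Tc) (-lq)) := by
    intro t ht; simp only [hf]; rw [hv1 t ht]; norm_num
  have he2 : EqOn f (fun t => l0 * ((l0 + u*lq) + u*t)⁻¹) (Icc (-lq) (0:ℝ)) := by
    intro t ht
    have hd : (0:ℝ) < l0 + u*lq + u*t := by nlinarith [ht.1]
    simp only [hf]; rw [hv2 t ht]
    have : 1 + u * ((lq + t)/l0) = (l0 + u*lq + u*t)/l0 := by field_simp; ring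
    rw [this, one_div_div, div_eq_mul_inv]
    try ring_nf
  have he3 : EqOn f (fun _ => (1 + u*lq/l0)⁻¹) (Icc (0:ℝ) (l0 - lq)) := by
    intro t ht; simp only [hf]; rw [hv3 t ht, one_div, mul_div_assoc]
  have he4 : EqOn f (fun t => l0 * ((l0 + u*l0) + (-u)*t)⁻¹) (Icc (l0 - lq) l0) := by
    intro t ht
    have hd : (0:ℝ) < l0 + u*l0 + (-u)*t := by nlinarith [ht.2]
    simp only [hf]; rw [hv4 t ht]
    have : 1 + u * ((l0 - t)/l0) = (l0 + u*l0 + (-u)*t)/l0 := by field_simp; ring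
    rw [this, one_div_div, div_eq_mul_inv]
    try ring_nf
  have he5 : EqOn f (fun _ => (1:ℝ)) (Icc l0 Tc) := by
    intro t ht; simp only [hf]; rw [hv5 t ht]; norm_num
  -- orderings
  have o1 : -Tc ≤ -lq := by linarith
  have o2 : -lq ≤ (0:ℝ) := by linarith
  have o3 : (0:ℝ) ≤ l0 - lq := by linarith
  have o4 : l0 - lq ≤ l0 := by linarith
  have o5 : l0 ≤ Tc := hl0Tc
  -- integrabilities
  have ii1 : IntervalIntegrable f volume (-Tc) (-lq) := by
    rw [intervalIntegrable_iff_integrableOn_Ioc_of_le o1]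
    exact ((integrableOn_const_iff).mpr (Or.inr (by simp))).congr_fun
      (fun t ht => (he1 (Ioc_subset_Icc_self ht)).symm) measurableSet_Ioc
  have ii2 : IntervalIntegrable f volume (-lq) 0 := by
    rw [intervalIntegrable_iff_integrableOn_Ioc_of_le o2]
    exact (contOn_aff (l0 + u*lq) u (-lq) 0 l0
        (fun t ht => by nlinarith [ht.1])).congr_fun
      (fun t ht => (he2 (Ioc_subset_Icc_self ht)).symm) measurableSet_Ioc
  have ii3 : IntervalIntegrable f volume 0 (l0 - lq) := by
    rw [intervalIntegrable_iff_integrableOn_Ioc_of_le o3]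
    exact ((integrableOn_const_iff).mpr (Or.inr (by simp))).congr_fun
      (fun t ht => (he3 (Ioc_subset_Icc_self ht)).symm) measurableSet_Ioc
  have ii4 : IntervalIntegrable f volume (l0 - lq) l0 := by
    rw [intervalIntegrable_iff_integrableOn_Ioc_of_le o4]
    exact (contOn_aff (l0 + u*l0) (-u) (l0 - lq) l0 l0
        (fun t ht => by nlinarith [ht.2])).congr_fun
      (fun t ht => (he4 (Ioc_subset_Icc_self ht)).symm) measurableSet_Ioc
  have ii5 : IntervalIntegrable f volume l0 Tc := by
    rw [intervalIntegrable_iff_integrableOn_Ioc_of_le o5]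
    exact ((integrableOn_const_iff).mpr (Or.inr (by simp))).congr_fun
      (fun t ht => (he5 (Ioc_subset_Icc_self ht)).symm) measurableSet_Ioc
  -- piece values
  set L := Real.log (l0 + u*lq) - Real.log l0 with hL
  have int1 : ∫ t in (-Tc)..(-lq), f t = Tc - lq := by
    rw [intervalIntegral.integral_congr (by rw [uIcc_of_le o1]; exact he1)]
    simp; ring
  have int2 : ∫ t in (-lq)..(0:ℝ), f t = l0 / u * L := by
    rw [intervalIntegral.integral_congr (by rw [uIcc_of_le o2]; exact he2)]
    rw [intervalIntegral.integral_const_mul,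
      int_aff (l0 + u*lq) u (-lq) 0 (ne_of_gt hu)
        (fun t ht => by rw [uIcc_of_le o2] at ht; nlinarith [ht.1])]
    rw [hL]; ring_nf
  have int3 : ∫ t in (0:ℝ)..(l0 - lq), f t = (l0 - lq) * (1 + u*lq/l0)⁻¹ := by
    rw [intervalIntegral.integral_congr (by rw [uIcc_of_le o3]; exact he3)]
    simp [smul_eq_mul]
  have int4 : ∫ t in (l0 - lq)..l0, f t = l0 / u * L := by
    rw [intervalIntegral.integral_congr (by rw [uIcc_of_le o4]; exact he4)]
    rw [intervalIntegral.integral_const_mul,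
      int_aff (l0 + u*l0) (-u) (l0 - lq) l0 (by linarith)
        (fun t ht => by rw [uIcc_of_le o4] at ht; nlinarith [ht.2])]
    have e1 : l0 + u*l0 + (-u)*l0 = l0 := by ring
    have e2 : l0 + u*l0 + (-u)*(l0 - lq) = l0 + u*lq := by ring
    rw [e1, e2, hL]; field_simp [hu.ne']; ring
  have int5 : ∫ t in l0..Tc, f t = Tc - l0 := by
    rw [intervalIntegral.integral_congr (by rw [uIcc_of_le o5]; exact he5)]
    simp
  -- assemble
  have hIcc : ∫ t in Icc (-Tc) Tc, 1 / (1 + u * h t) = ∫ t in (-Tc)..Tc, f t := by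
    rw [integral_Icc_eq_integral_Ioc, intervalIntegral.integral_of_le (by linarith)]
  rw [hIcc,
    ← integral_add_adjacent_intervals ii1 (ii2.trans (ii3.trans (ii4.trans ii5))),
    ← integral_add_adjacent_intervals ii2 (ii3.trans (ii4.trans ii5)),
    ← integral_add_adjacent_intervals ii3 (ii4.trans ii5),
    ← integral_add_adjacent_intervals ii4 ii5,
    int1, int2, int3, int4, int5]
  have hLog : Real.log (1 + u * lq / l0) = L := by
    rw [hL, ← Real.log_div (by positivity) (ne_of_gt hl0)]
    congr 1; field_simp
  rw [hLog]
  field_simp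
  ring
end

section
/- Let l_{q0}, l_q > 0 with l_q > l_{q0}, let T_c ≥ l_q and u > 0. Let T be uniformly distributed on [−T_c, T_c] and let h(T) be the collision overlap function: h(T) = (l_{q0} − T)/l_{q0} for 0 ≤ T ≤ l_{q0}; h(T) = 1 for l_{q0} − l_q ≤ T ≤ 0; h(T) = (l_q + T)/l_{q0} for −l_q ≤ T ≤ l_{q0} − l_q; h(T) = 0 otherwise. Then E[ 1 / (1 + u·h(T)) ] = 1 − (l_{q0} + l_q)/(2 T_c) + (l_{q0}/(T_c u)) · log(1 + u) − (l_{q0} − l_q)/(2 T_c (1 + u)). -/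
open MeasureTheory Set

private lemma aux_int_inv (c v a b : ℝ) (hv : v ≠ 0)
    (hpos : ∀ t ∈ Set.uIcc a b, 0 < c + v * t) :
    ∫ t in a..b, (c + v * t)⁻¹ =
      (Real.log (c + v * b) - Real.log (c + v * a)) / v := by
  have hderiv : ∀ t ∈ Set.uIcc a b,
      HasDerivAt (fun t => Real.log (c + v * t) / v) ((c + v * t)⁻¹) t := by
    intro t ht
    have h1 : HasDerivAt (fun t : ℝ => c + v * t) v t := by
      simpa using ((hasDerivAt_id t).const_mul v).const_add c
    have h2 := ((Real.hasDerivAt_log (ne_of_gt (hpos t ht))).comp t h1).div_const v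
    have h3 : (c + v * t)⁻¹ * v / v = (c + v * t)⁻¹ := by rw [mul_div_assoc, div_self hv, mul_one]
    rw [h3] at h2
    exact h2
  have hint : IntervalIntegrable (fun t => (c + v * t)⁻¹) volume a b := by
    apply ContinuousOn.intervalIntegrable
    exact (continuousOn_const.add (continuousOn_const.mul continuousOn_id)).inv₀
      (fun t ht => ne_of_gt (hpos t ht))
  rw [intervalIntegral.integral_eq_sub_of_hasDerivAt hderiv hint]
  ring

theorem stmt_4 (l0 lq Tc u : ℝ) (hl0 : 0 < l0) (hlq : 0 < lq) (hlt : l0 < lq)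
    (hTc : lq ≤ Tc) (hu : 0 < u)
    (h : ℝ → ℝ)
    (hdef : ∀ t : ℝ,
      h t = if 0 ≤ t ∧ t ≤ l0 then (l0 - t) / l0
            else if l0 - lq ≤ t ∧ t ≤ 0 then 1
            else if -lq ≤ t ∧ t ≤ l0 - lq then (lq + t) / l0
            else 0) :
    (1 / (2 * Tc)) * ∫ t in Icc (-Tc) Tc, 1 / (1 + u * h t) =
      1 - (l0 + lq) / (2 * Tc) + (l0 / (Tc * u)) * Real.log (1 + u)
        - (l0 - lq) / (2 * Tc * (1 + u)) := by
  have hTc0 : 0 < Tc := lt_of_lt_of_le hlq hTc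
  have h1u : (0:ℝ) < 1 + u := by linarith
  have hl0Tc : l0 ≤ Tc := le_of_lt (lt_of_lt_of_le hlt hTc)
  -- EqOn lemmas on the five pieces
  have e1 : EqOn (fun t => 1 / (1 + u * h t)) (fun _ => (1:ℝ)) (uIcc (-Tc) (-lq)) := by
    intro t ht
    rw [uIcc_of_le (by linarith)] at ht
    obtain ⟨ht1, ht2⟩ := ht
    simp only [hdef t]
    split_ifs with c1 c2 c3
    · exact absurd c1.1 (by linarith)
    · exact absurd c2.1 (by linarith)
    · have : t = -lq := le_antisymm ht2 c3.1
      subst this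
      simp
    · simp
  have e2 : EqOn (fun t => 1 / (1 + u * h t))
      (fun t => l0 * ((l0 + u * lq) + u * t)⁻¹) (uIcc (-lq) (l0 - lq)) := by
    intro t ht
    rw [uIcc_of_le (by linarith)] at ht
    obtain ⟨ht1, ht2⟩ := ht
    have hd : (0:ℝ) < (l0 + u * lq) + u * t := by nlinarith
    simp only [hdef t]
    split_ifs with c1 c2 c3
    · exact absurd c1.1 (by linarith)
    · have : t = l0 - lq := le_antisymm ht2 c2.1
      subst this
      rw [show (l0 + u * lq) + u * (l0 - lq) = l0 * (1 + u) by ring]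
      field_simp
    · have hl0' : l0 ≠ 0 := ne_of_gt hl0
      have heq : 1 + u * ((lq + t) / l0) = ((l0 + u * lq) + u * t) / l0 := by
        field_simp
        ring
      rw [heq, one_div_div, div_eq_mul_inv]
    · exact absurd ⟨ht1, ht2⟩ c3
  have e3 : EqOn (fun t => 1 / (1 + u * h t)) (fun _ => 1 / (1 + u))
      (uIcc (l0 - lq) 0) := by
    intro t ht
    rw [uIcc_of_le (by linarith)] at ht
    obtain ⟨ht1, ht2⟩ := ht
    simp only [hdef t]
    split_ifs with c1 c2 c3
    · have : t = 0 := le_antisymm ht2 c1.1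
      subst this
      rw [sub_zero, div_self (ne_of_gt hl0), mul_one]
    · rw [mul_one]
    · exact absurd ⟨ht1, ht2⟩ c2
    · exact absurd ⟨ht1, ht2⟩ c2
  have e4 : EqOn (fun t => 1 / (1 + u * h t))
      (fun t => l0 * ((l0 + u * l0) + (-u) * t)⁻¹) (uIcc 0 l0) := by
    intro t ht
    rw [uIcc_of_le (by linarith)] at ht
    obtain ⟨ht1, ht2⟩ := ht
    have hd : (0:ℝ) < (l0 + u * l0) + (-u) * t := by nlinarith
    simp only [hdef t]
    rw [if_pos ⟨ht1, ht2⟩]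
    have hl0' : l0 ≠ 0 := ne_of_gt hl0
    have heq : 1 + u * ((l0 - t) / l0) = ((l0 + u * l0) + (-u) * t) / l0 := by
      field_simp
      ring
    rw [heq, one_div_div, div_eq_mul_inv]
  have e5 : EqOn (fun t => 1 / (1 + u * h t)) (fun _ => (1:ℝ)) (uIcc l0 Tc) := by
    intro t ht
    rw [uIcc_of_le (by linarith)] at ht
    obtain ⟨ht1, ht2⟩ := ht
    simp only [hdef t]
    split_ifs with c1 c2 c3
    · have : t = l0 := le_antisymm c1.2 ht1
      subst this
      simp
    · exact absurd c2.2 (by linarith)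
    · exact absurd c3.2 (by linarith)
    · simp
  -- integrability on each piece
  have i1 : IntervalIntegrable (fun t => 1 / (1 + u * h t)) volume (-Tc) (-lq) :=
    (continuousOn_const.congr e1).intervalIntegrable
  have i2 : IntervalIntegrable (fun t => 1 / (1 + u * h t)) volume (-lq) (l0 - lq) := by
    refine ContinuousOn.intervalIntegrable (ContinuousOn.congr ?_ e2)
    refine continuousOn_const.mul ((continuousOn_const.add
      (continuousOn_const.mul continuousOn_id)).inv₀ ?_)
    intro t ht
    change (l0 + u * lq) + u * t ≠ 0
    rw [uIcc_of_le (by linarith)] at ht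
    obtain ⟨ht1, ht2⟩ := ht
    exact ne_of_gt (by nlinarith)
  have i3 : IntervalIntegrable (fun t => 1 / (1 + u * h t)) volume (l0 - lq) 0 :=
    (continuousOn_const.congr e3).intervalIntegrable
  have i4 : IntervalIntegrable (fun t => 1 / (1 + u * h t)) volume 0 l0 := by
    refine ContinuousOn.intervalIntegrable (ContinuousOn.congr ?_ e4)
    refine continuousOn_const.mul ((continuousOn_const.add
      (continuousOn_const.mul continuousOn_id)).inv₀ ?_)
    intro t ht
    change (l0 + u * l0) + (-u) * t ≠ 0
    rw [uIcc_of_le (by linarith)] at ht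
    obtain ⟨ht1, ht2⟩ := ht
    exact ne_of_gt (by nlinarith)
  have i5 : IntervalIntegrable (fun t => 1 / (1 + u * h t)) volume l0 Tc :=
    (continuousOn_const.congr e5).intervalIntegrable
  -- value of each piece
  have I1 : ∫ t in (-Tc)..(-lq), 1 / (1 + u * h t) = Tc - lq := by
    rw [intervalIntegral.integral_congr e1, intervalIntegral.integral_const]
    simp; ring
  have I2 : ∫ t in (-lq)..(l0 - lq), 1 / (1 + u * h t) = (l0 / u) * Real.log (1 + u) := by
    rw [intervalIntegral.integral_congr e2, intervalIntegral.integral_const_mul,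
      aux_int_inv (l0 + u * lq) u (-lq) (l0 - lq) (ne_of_gt hu)
        (by
          intro t ht
          rw [uIcc_of_le (by linarith)] at ht
          obtain ⟨ht1, ht2⟩ := ht
          nlinarith)]
    rw [show l0 + u * lq + u * (l0 - lq) = l0 * (1 + u) by ring,
      show l0 + u * lq + u * (-lq) = l0 by ring,
      Real.log_mul (ne_of_gt hl0) (ne_of_gt h1u)]
    ring
  have I3 : ∫ t in (l0 - lq)..(0:ℝ), 1 / (1 + u * h t) = (lq - l0) / (1 + u) := by
    rw [intervalIntegral.integral_congr e3, intervalIntegral.integral_const]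
    rw [smul_eq_mul]
    ring
  have I4 : ∫ t in (0:ℝ)..l0, 1 / (1 + u * h t) = (l0 / u) * Real.log (1 + u) := by
    rw [intervalIntegral.integral_congr e4, intervalIntegral.integral_const_mul,
      aux_int_inv (l0 + u * l0) (-u) 0 l0 (by linarith)
        (by
          intro t ht
          rw [uIcc_of_le (by linarith)] at ht
          obtain ⟨ht1, ht2⟩ := ht
          nlinarith)]
    rw [show l0 + u * l0 + -u * l0 = l0 by ring,
      show l0 + u * l0 + -u * 0 = l0 * (1 + u) by ring,
      Real.log_mul (ne_of_gt hl0) (ne_of_gt h1u)]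
    field_simp
    ring
  have I5 : ∫ t in l0..Tc, 1 / (1 + u * h t) = Tc - l0 := by
    rw [intervalIntegral.integral_congr e5, intervalIntegral.integral_const]
    simp
  -- assemble
  have key : ∫ t in Icc (-Tc) Tc, 1 / (1 + u * h t) =
      (Tc - lq) + (l0 / u) * Real.log (1 + u) + (lq - l0) / (1 + u)
        + (l0 / u) * Real.log (1 + u) + (Tc - l0) := by
    rw [integral_Icc_eq_integral_Ioc,
      ← intervalIntegral.integral_of_le (by linarith : -Tc ≤ Tc),
      ← intervalIntegral.integral_add_adjacent_intervals
        (((i1.trans i2).trans i3).trans i4) i5,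
      ← intervalIntegral.integral_add_adjacent_intervals ((i1.trans i2).trans i3) i4,
      ← intervalIntegral.integral_add_adjacent_intervals (i1.trans i2) i3,
      ← intervalIntegral.integral_add_adjacent_intervals i1 i2,
      I1, I2, I3, I4, I5]
  rw [key]
  field_simp
  ring
end

section
/- Let l_{q0}, l_q > 0, T_c ≥ max(l_q, l_{q0}), u > 0, and let h be the normalized overlap h(T) = (1/l_{q0}) μ([T, T+l_q] ∩ [0, l_{q0}]). Then the unified formula holds: (1/(2T_c)) ∫_{−T_c}^{T_c} 1/(1 + u·h(t)) dt = 1 − (l_{q0} + l_q)/(2 T_c) + (l_{q0}/(T_c u)) log(1 + u·min(l_q, l_{q0})/l_{q0}) + |l_{q0} − l_q| / (2 T_c (1 + u·min(l_q, l_{q0})/l_{q0})). -/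
set_option maxHeartbeats 1000000
open MeasureTheory Set

noncomputable def overlap (l0 lq T : ℝ) : ℝ :=
  (volume (Icc T (T + lq) ∩ Icc 0 l0)).toReal / l0

lemma overlap_eq (l0 lq T : ℝ) :
    overlap l0 lq T = max (min (T + lq) l0 - max T 0) 0 / l0 := by
  unfold overlap
  rw [Icc_inter_Icc, Real.volume_Icc, ENNReal.toReal_ofReal']

lemma overlap_nonneg (l0 lq T : ℝ) (hl0 : 0 < l0) : 0 ≤ overlap l0 lq T := by
  rw [overlap_eq]; positivity

lemma cont_f (l0 lq u : ℝ) (hl0 : 0 < l0) (hu : 0 < u) :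
    Continuous (fun t => 1 / (1 + u * overlap l0 lq t)) := by
  apply continuous_const.div
  · simp only [overlap_eq]; fun_prop
  · intro t
    have := overlap_nonneg l0 lq t hl0
    nlinarith

theorem stmt_5 (l0 lq Tc u : ℝ) (hl0 : 0 < l0) (hlq : 0 < lq)
    (hTc : max lq l0 ≤ Tc) (hu : 0 < u) :
    (1 / (2 * Tc)) * ∫ t in Icc (-Tc) Tc, 1 / (1 + u * overlap l0 lq t) =
      1 - (l0 + lq) / (2 * Tc)
        + (l0 / (Tc * u)) * Real.log (1 + u * min lq l0 / l0)
        + |l0 - lq| / (2 * Tc * (1 + u * min lq l0 / l0)) := by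
  have hTlq : lq ≤ Tc := le_trans (le_max_left _ _) hTc
  have hTl0 : l0 ≤ Tc := le_trans (le_max_right _ _) hTc
  have hTc0 : 0 < Tc := lt_of_lt_of_le hlq hTlq
  set m := min lq l0 with hmdef
  have hm0 : 0 < m := lt_min hlq hl0
  have hml : m ≤ lq := min_le_left _ _
  have hml0 : m ≤ l0 := min_le_right _ _
  set c := 1 + u * m / l0 with hcdef
  have hc0 : 0 < c := by rw [hcdef]; positivity
  set f : ℝ → ℝ := fun t => 1 / (1 + u * overlap l0 lq t) with hf
  have hcont := cont_f l0 lq u hl0 hu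
  have hfi : ∀ a b : ℝ, IntervalIntegrable f volume a b := fun a b =>
    hcont.intervalIntegrable a b
  -- Icc integral to interval integral
  have hIcc : ∫ t in Icc (-Tc) Tc, f t = ∫ t in (-Tc)..Tc, f t := by
    rw [intervalIntegral.integral_of_le (by linarith),
      MeasureTheory.integral_Icc_eq_integral_Ioc]
  -- Piece 1
  have hP1 : ∫ t in (-Tc)..(-lq), f t = Tc - lq := by
    have hg : EqOn f (fun _ => (1:ℝ)) (uIcc (-Tc) (-lq)) := by
      intro t ht
      rw [uIcc_of_le (by linarith)] at ht
      have h2 : min (t + lq) l0 = t + lq := min_eq_left (by linarith [ht.2])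
      have h3 : max t (0:ℝ) = 0 := max_eq_right (by linarith [ht.2])
      have hov : overlap l0 lq t = 0 := by
        rw [overlap_eq, h2, h3, max_eq_right (by linarith [ht.2]), zero_div]
      simp [hf, hov]
    rw [intervalIntegral.integral_congr hg, intervalIntegral.integral_const, smul_eq_mul]
    ring
  -- Piece 5
  have hP5 : ∫ t in l0..Tc, f t = Tc - l0 := by
    have hg : EqOn f (fun _ => (1:ℝ)) (uIcc l0 Tc) := by
      intro t ht
      rw [uIcc_of_le (by linarith)] at ht
      have h2 : min (t + lq) l0 = l0 := min_eq_right (by linarith [ht.1])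
      have h3 : max t (0:ℝ) = t := max_eq_left (by linarith [ht.1])
      have hov : overlap l0 lq t = 0 := by
        rw [overlap_eq, h2, h3, max_eq_right (by linarith [ht.1]), zero_div]
      simp [hf, hov]
    rw [intervalIntegral.integral_congr hg, intervalIntegral.integral_const, smul_eq_mul]
    ring
  -- log identity
  have hlogid : Real.log (l0 + u * m) - Real.log l0 = Real.log c := by
    rw [← Real.log_div (by positivity) hl0.ne']
    congr 1
    rw [hcdef]; field_simp
  -- Piece 2
  have hP2 : ∫ t in (-lq)..(m - lq), f t = (l0 / u) * Real.log c := by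
    have hg : EqOn f (fun t => l0 / (l0 + u * (t + lq))) (uIcc (-lq) (m - lq)) := by
      intro t ht
      rw [uIcc_of_le (by linarith)] at ht
      have h2 : min (t + lq) l0 = t + lq := min_eq_left (by linarith [ht.2])
      have h3 : max t (0:ℝ) = 0 := max_eq_right (by linarith [ht.2])
      have hov : overlap l0 lq t = (t + lq) / l0 := by
        rw [overlap_eq, h2, h3, show t + lq - 0 = t + lq by ring,
          max_eq_left (by linarith [ht.1])]
      have hD : 0 < l0 + u * (t + lq) := by nlinarith [ht.1]
      have hE : 0 < 1 + u * ((t + lq) / l0) := by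
        have h9 : 0 ≤ (t + lq) / l0 := div_nonneg (by linarith [ht.1]) hl0.le
        nlinarith
      simp only [hf, hov]
      rw [div_eq_div_iff hE.ne' hD.ne']
      field_simp
    rw [intervalIntegral.integral_congr hg]
    have key : ∫ t in (-lq)..(m - lq), l0 / (l0 + u * (t + lq)) =
        (l0 / u) * Real.log (l0 + u * ((m - lq) + lq)) -
        (l0 / u) * Real.log (l0 + u * ((-lq) + lq)) := by
      apply intervalIntegral.integral_eq_sub_of_hasDerivAt
        (f := fun t => (l0 / u) * Real.log (l0 + u * (t + lq)))
      · intro x hx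
        rw [uIcc_of_le (by linarith)] at hx
        have hD : 0 < l0 + u * (x + lq) := by nlinarith [hx.1]
        have h1 : HasDerivAt (fun t : ℝ => l0 + u * (t + lq)) u x := by
          simpa using (((hasDerivAt_id x).add_const lq).const_mul u).const_add l0
        have h2 := (h1.log hD.ne').const_mul (l0 / u)
        convert h2 using 1
        · rfl
        field_simp
      · apply ContinuousOn.intervalIntegrable
        apply ContinuousOn.div continuousOn_const (by fun_prop)
        intro x hx
        rw [uIcc_of_le (by linarith)] at hx
        nlinarith [hx.1]
    rw [key, show (m - lq) + lq = m by ring, show (-lq) + lq = (0:ℝ) by ring]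
    rw [mul_zero, add_zero, ← mul_sub, hlogid]
  -- Piece 4
  have hP4 : ∫ t in (l0 - m)..l0, f t = (l0 / u) * Real.log c := by
    have hg : EqOn f (fun t => l0 / (l0 + u * (l0 - t))) (uIcc (l0 - m) l0) := by
      intro t ht
      rw [uIcc_of_le (by linarith)] at ht
      have h2 : min (t + lq) l0 = l0 := min_eq_right (by linarith [ht.1])
      have h3 : max t (0:ℝ) = t := max_eq_left (by linarith [ht.1])
      have hov : overlap l0 lq t = (l0 - t) / l0 := by
        rw [overlap_eq, h2, h3, max_eq_left (by linarith [ht.2])]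
      have hD : 0 < l0 + u * (l0 - t) := by nlinarith [ht.2]
      have hE : 0 < 1 + u * ((l0 - t) / l0) := by
        have h9 : 0 ≤ (l0 - t) / l0 := div_nonneg (by linarith [ht.2]) hl0.le
        nlinarith
      simp only [hf, hov]
      rw [div_eq_div_iff hE.ne' hD.ne']
      field_simp
    rw [intervalIntegral.integral_congr hg]
    have key : ∫ t in (l0 - m)..l0, l0 / (l0 + u * (l0 - t)) =
        (-(l0 / u)) * Real.log (l0 + u * (l0 - l0)) -
        (-(l0 / u)) * Real.log (l0 + u * (l0 - (l0 - m))) := by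
      apply intervalIntegral.integral_eq_sub_of_hasDerivAt
        (f := fun t => (-(l0 / u)) * Real.log (l0 + u * (l0 - t)))
      · intro x hx
        rw [uIcc_of_le (by linarith)] at hx
        have hD : 0 < l0 + u * (l0 - x) := by nlinarith [hx.2]
        have h1 : HasDerivAt (fun t : ℝ => l0 + u * (l0 - t)) (-u) x := by
          simpa using (((hasDerivAt_id x).const_sub l0).const_mul u).const_add l0
        have h2 := (h1.log hD.ne').const_mul (-(l0 / u))
        convert h2 using 1
        · rfl
        field_simp
      · apply ContinuousOn.intervalIntegrable
        apply ContinuousOn.div continuousOn_const (by fun_prop)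
        intro x hx
        rw [uIcc_of_le (by linarith)] at hx
        nlinarith [hx.2]
    rw [key, show l0 - l0 = (0:ℝ) by ring, show l0 - (l0 - m) = m by ring]
    rw [mul_zero, add_zero]
    rw [show (-(l0/u)) * Real.log l0 - (-(l0/u)) * Real.log (l0 + u * m)
        = (l0/u) * (Real.log (l0 + u * m) - Real.log l0) by ring, hlogid]
  -- Piece 3
  have hP3 : ∫ t in (m - lq)..(l0 - m), f t = (l0 + lq - 2 * m) * (1 / c) := by
    have hg : EqOn f (fun _ => 1 / c) (uIcc (m - lq) (l0 - m)) := by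
      intro t ht
      rw [uIcc_of_le (by linarith)] at ht
      have hov : overlap l0 lq t = m / l0 := by
        rw [overlap_eq]
        rcases le_total lq l0 with h | h
        · have hm' : m = lq := min_eq_left h
          have h2 : min (t + lq) l0 = t + lq := by
            apply min_eq_left; nlinarith [ht.2]
          have h3 : max t (0:ℝ) = t := by
            apply max_eq_left; nlinarith [ht.1]
          rw [h2, h3, show t + lq - t = lq by ring, max_eq_left hlq.le, hm']
        · have hm' : m = l0 := min_eq_right h
          have h2 : min (t + lq) l0 = l0 := by
            apply min_eq_right; nlinarith [ht.1]
          have h3 : max t (0:ℝ) = 0 := by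
            apply max_eq_right; nlinarith [ht.2]
          rw [h2, h3, show l0 - 0 = l0 by ring, max_eq_left hl0.le, hm']
      simp only [hf, hov, hcdef, mul_div_assoc]
    rw [intervalIntegral.integral_congr hg, intervalIntegral.integral_const, smul_eq_mul]
    ring
  -- assemble
  have habs : |l0 - lq| = l0 + lq - 2 * m := by
    rcases le_total lq l0 with h | h
    · rw [abs_of_nonneg (by linarith), hmdef, min_eq_left h]; ring
    · rw [abs_of_nonpos (by linarith), hmdef, min_eq_right h]; ring
  have s4 : ∫ t in (l0 - m)..Tc, f t = (l0/u) * Real.log c + (Tc - l0) := by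
    rw [← intervalIntegral.integral_add_adjacent_intervals (hfi (l0 - m) l0) (hfi l0 Tc),
      hP4, hP5]
  have s3 : ∫ t in (m - lq)..Tc, f t =
      (l0 + lq - 2 * m) * (1 / c) + ((l0/u) * Real.log c + (Tc - l0)) := by
    rw [← intervalIntegral.integral_add_adjacent_intervals (hfi (m - lq) (l0 - m))
      (hfi (l0 - m) Tc), hP3, s4]
  have s2 : ∫ t in (-lq)..Tc, f t = (l0/u) * Real.log c +
      ((l0 + lq - 2 * m) * (1 / c) + ((l0/u) * Real.log c + (Tc - l0))) := by
    rw [← intervalIntegral.integral_add_adjacent_intervals (hfi (-lq) (m - lq))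
      (hfi (m - lq) Tc), hP2, s3]
  have s1 : ∫ t in (-Tc)..Tc, f t = (Tc - lq) + ((l0/u) * Real.log c +
      ((l0 + lq - 2 * m) * (1 / c) + ((l0/u) * Real.log c + (Tc - l0)))) := by
    rw [← intervalIntegral.integral_add_adjacent_intervals (hfi (-Tc) (-lq))
      (hfi (-lq) Tc), hP1, s2]
  rw [hIcc, s1, habs]
  field_simp
  ring
end

section
/- Let η > 2, l_{q0}, l_q > 0, T_c ≥ max(l_q, l_{q0}), and let h(t) be the normalized overlap function. Then ∫_{−T_c}^{T_c} h(t)^{2/η} dt = (2η/(η+2)) · l_{q0} · (min(1, l_q/l_{q0}))^{(η+2)/η} + (min(1, l_q/l_{q0}))^{2/η} · |l_{q0} − l_q|. -/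
open MeasureTheory Set

theorem stmt_10 (η l0 lq Tc : ℝ) (hη : 2 < η) (hl0 : 0 < l0) (hlq : 0 < lq)
    (hTc : max lq l0 ≤ Tc) :
    ∫ t in Icc (-Tc) Tc, overlap l0 lq t ^ (2 / η) =
      (2 * η / (η + 2)) * l0 * (min 1 (lq / l0)) ^ ((η + 2) / η)
        + (min 1 (lq / l0)) ^ (2 / η) * |l0 - lq| := by
  have hη0 : (0:ℝ) < η := by linarith
  set a : ℝ := 2 / η with ha_def
  have ha0 : 0 < a := by positivity
  set m : ℝ := min lq l0 with hm_def
  have hm0 : 0 < m := lt_min hlq hl0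
  have hml0 : m ≤ l0 := min_le_right _ _
  have hmlq : m ≤ lq := min_le_left _ _
  have hTclq : lq ≤ Tc := le_trans (le_max_left _ _) hTc
  have hTcl0 : l0 ≤ Tc := le_trans (le_max_right _ _) hTc
  -- overlap formula
  have hov : ∀ t, overlap l0 lq t = max (min (t + lq) l0 - max t 0) 0 / l0 := by
    intro t
    unfold overlap
    rw [Icc_inter_Icc, Real.volume_Icc, ENNReal.toReal_ofReal']
  set f : ℝ → ℝ := fun t => (max (min (t + lq) l0 - max t 0) 0 / l0) ^ a with hf_def
  have hcont : Continuous f := by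
    apply Continuous.rpow_const
    · fun_prop
    · exact fun x => Or.inr ha0.le
  have hii : ∀ x y : ℝ, IntervalIntegrable f volume x y := fun x y =>
    hcont.intervalIntegrable x y
  -- convert to interval integral
  have hstep : ∫ t in Icc (-Tc) Tc, overlap l0 lq t ^ (2 / η) = ∫ t in (-Tc)..Tc, f t := by
    simp only [hov, ← ha_def, ← hf_def]
    rw [MeasureTheory.integral_Icc_eq_integral_Ioc,
      ← intervalIntegral.integral_of_le (by linarith : -Tc ≤ Tc)]
  rw [hstep]
  -- split the integral
  have hsplit : ∫ t in (-Tc)..Tc, f t =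
      ((∫ t in (-Tc)..(-lq), f t) + ∫ t in (-lq)..(m - lq), f t)
      + ((∫ t in (m - lq)..(l0 - m), f t) + ((∫ t in (l0 - m)..l0, f t)
        + ∫ t in l0..Tc, f t)) := by
    rw [intervalIntegral.integral_add_adjacent_intervals (hii _ _) (hii _ _),
      intervalIntegral.integral_add_adjacent_intervals (hii _ _) (hii _ _),
      intervalIntegral.integral_add_adjacent_intervals (hii _ _) (hii _ _),
      intervalIntegral.integral_add_adjacent_intervals (hii _ _) (hii _ _)]
  rw [hsplit]
  -- piece 1 : zero
  have h1 : ∫ t in (-Tc)..(-lq), f t = 0 := by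
    rw [intervalIntegral.integral_congr (g := fun _ => (0:ℝ))]
    · simp
    · intro t ht
      rw [uIcc_of_le (by linarith)] at ht
      obtain ⟨_, ht2⟩ := ht
      have h1 : min (t + lq) l0 - max t 0 ≤ 0 := by
        have : min (t + lq) l0 ≤ t + lq := min_le_left _ _
        have : max t 0 ≥ 0 := le_max_right _ _
        nlinarith [min_le_left (t + lq) l0, le_max_right t 0]
      simp only [hf_def]
      rw [max_eq_right h1, zero_div, Real.zero_rpow ha0.ne']
  -- piece 5 : zero
  have h5 : ∫ t in l0..Tc, f t = 0 := by
    rw [intervalIntegral.integral_congr (g := fun _ => (0:ℝ))]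
    · simp
    · intro t ht
      rw [uIcc_of_le (by linarith)] at ht
      obtain ⟨ht1, _⟩ := ht
      have hmax : max t 0 = t := max_eq_left (by linarith)
      have hmin : min (t + lq) l0 = l0 := min_eq_right (by linarith)
      simp only [hf_def, hmax, hmin]
      rw [max_eq_right (by linarith), zero_div, Real.zero_rpow ha0.ne']
  -- key integral
  have hK : ∫ s in (0:ℝ)..m, (s / l0) ^ a = m ^ (a + 1) / ((a + 1) * l0 ^ a) := by
    rw [intervalIntegral.integral_congr (g := fun s => s ^ a / l0 ^ a)]
    · rw [intervalIntegral.integral_div, integral_rpow (Or.inl (by linarith)),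
        Real.zero_rpow (by linarith)]
      field_simp
      ring
    · intro s hs
      rw [uIcc_of_le hm0.le] at hs
      exact Real.div_rpow hs.1 hl0.le a
  -- piece 2
  have h2 : ∫ t in (-lq)..(m - lq), f t = m ^ (a + 1) / ((a + 1) * l0 ^ a) := by
    rw [intervalIntegral.integral_congr (g := fun t => ((t + lq) / l0) ^ a)]
    · have := intervalIntegral.integral_comp_add_right (a := -lq) (b := m - lq)
        (fun s => (s / l0) ^ a) lq
      rw [this, show -lq + lq = (0:ℝ) by ring, show m - lq + lq = m by ring]
      exact hK
    · intro t ht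
      rw [uIcc_of_le (by linarith)] at ht
      obtain ⟨ht1, ht2⟩ := ht
      have hmax : max t 0 = 0 := max_eq_right (by linarith)
      have hmin : min (t + lq) l0 = t + lq := min_eq_left (by linarith)
      simp only [hf_def, hmax, hmin, sub_zero]
      rw [max_eq_left (by linarith)]
  -- piece 4
  have h4 : ∫ t in (l0 - m)..l0, f t = m ^ (a + 1) / ((a + 1) * l0 ^ a) := by
    rw [intervalIntegral.integral_congr (g := fun t => ((l0 - t) / l0) ^ a)]
    · have := intervalIntegral.integral_comp_sub_left (a := l0 - m) (b := l0)
        (fun s => (s / l0) ^ a) l0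
      rw [this, show l0 - l0 = (0:ℝ) by ring, show l0 - (l0 - m) = m by ring]
      exact hK
    · intro t ht
      rw [uIcc_of_le (by linarith)] at ht
      obtain ⟨ht1, ht2⟩ := ht
      have hmax : max t 0 = t := max_eq_left (by linarith)
      have hmin : min (t + lq) l0 = l0 := min_eq_right (by linarith)
      simp only [hf_def, hmax, hmin]
      rw [max_eq_left (by linarith)]
  -- piece 3
  have h3 : ∫ t in (m - lq)..(l0 - m), f t = ((l0 - m) - (m - lq)) * (m / l0) ^ a := by
    rw [intervalIntegral.integral_congr (g := fun _ => (m / l0) ^ a)]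
    · rw [intervalIntegral.integral_const, smul_eq_mul]
    · intro t ht
      rw [uIcc_of_le (by linarith)] at ht
      obtain ⟨ht1, ht2⟩ := ht
      have hkey : min (t + lq) l0 - max t 0 = m := by
        rcases le_total lq l0 with h | h
        · have hm : m = lq := min_eq_left h
          have hmax : max t 0 = t := max_eq_left (by linarith)
          have hmin : min (t + lq) l0 = t + lq := min_eq_left (by linarith)
          rw [hmax, hmin, hm]; ring
        · have hm : m = l0 := min_eq_right h
          have hmax : max t 0 = 0 := max_eq_right (by linarith)
          have hmin : min (t + lq) l0 = l0 := min_eq_right (by linarith)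
          rw [hmax, hmin, hm]; ring
      simp only [hf_def, hkey]
      rw [max_eq_left hm0.le]
  rw [h1, h2, h3, h4, h5]
  -- final algebra
  have hmin1 : min 1 (lq / l0) = m / l0 := by
    rw [hm_def, ← min_div_div_right hl0.le, div_self hl0.ne', min_comm]
  have habs : (l0 - m) - (m - lq) = |l0 - lq| := by
    rcases le_total lq l0 with h | h
    · rw [abs_of_nonneg (by linarith), hm_def, min_eq_left h]; ring
    · rw [abs_of_nonpos (by linarith), hm_def, min_eq_right h]; ring
  have hexp1 : (η + 2) / η = a + 1 := by
    rw [ha_def]; field_simp; ring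
  rw [hmin1, ← habs, hexp1]
  have hrw : l0 * (m / l0) ^ (a + 1) = m ^ (a + 1) / l0 ^ a := by
    rw [Real.div_rpow hm0.le hl0.le, Real.rpow_add hl0, Real.rpow_one]
    have : l0 ^ a ≠ 0 := (Real.rpow_pos_of_pos hl0 a).ne'
    field_simp
  have hc1 : 2 * η / (η + 2) = 2 / (a + 1) := by
    rw [ha_def]
    rw [div_eq_div_iff (by linarith) (by positivity)]
    field_simp
    ring
  rw [hc1, mul_assoc, hrw]
  have ha1 : a + 1 ≠ 0 := by linarith
  have hl0a : l0 ^ a ≠ 0 := (Real.rpow_pos_of_pos hl0 a).ne'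
  field_simp
  ring
end

section
/- For η > 2, b > 0 and 0 ≤ d_{q−1} < d_q, the intra-cluster integral ∫_{d_{q−1}}^{d_q} (b r^{−η}/(1 + b r^{−η})) r dr is finite and bounded above by min( (d_q² − d_{q−1}²)/2, b^{2/η} π/(η sin(2π/η)) ). -/
open MeasureTheory Set Real

lemma beta_real (a : ℝ) (ha : 0 < a) (ha1 : a < 1) :
    IntegrableOn (fun x => x ^ (a-1) * (1-x) ^ (-a)) (Ioo (0:ℝ) 1) ∧
    ∫ x in Ioo (0:ℝ) 1, x ^ (a-1) * (1-x) ^ (-a) = π / Real.sin (π * a) := by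
  have h1a : 0 < 1 - a := by linarith
  have hconv := Complex.betaIntegral_convergent (u := (a:ℂ)) (v := ((1-a:ℝ):ℂ)) (by simpa) (by simpa)
  have key : ∀ x : ℝ, x ∈ Ioo (0:ℝ) 1 →
      ((x:ℂ) ^ ((a:ℂ) - 1) * ((1:ℂ) - x) ^ (((1-a:ℝ):ℂ) - 1)) = ((x ^ (a-1) * (1-x) ^ (-a) : ℝ) : ℂ) := by
    intro x hx
    have hx0 : (0:ℝ) ≤ x := hx.1.le
    have hx1 : (0:ℝ) ≤ 1 - x := by linarith [hx.2]
    rw [Complex.ofReal_mul, Complex.ofReal_cpow hx0, Complex.ofReal_cpow hx1]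
    congr 1
    · congr 1; push_cast; ring
    · congr 1 <;> push_cast <;> ring
  have hae : (fun x : ℝ => ((x:ℂ) ^ ((a:ℂ) - 1) * ((1:ℂ) - x) ^ (((1-a:ℝ):ℂ) - 1)).re)
      =ᶠ[ae (volume.restrict (Ioo (0:ℝ) 1))] (fun x : ℝ => x ^ (a-1) * (1-x) ^ (-a)) := by
    filter_upwards [ae_restrict_mem measurableSet_Ioo] with x hx
    rw [key x hx, Complex.ofReal_re]
  have hint : IntegrableOn (fun x => x ^ (a-1) * (1-x) ^ (-a)) (Ioo (0:ℝ) 1) :=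
    ((hconv.1.mono_set Ioo_subset_Ioc_self).re).congr hae
  refine ⟨hint, ?_⟩
  have hval : Complex.betaIntegral (a:ℂ) ((1-a:ℝ):ℂ)
      = ((∫ x in Ioo (0:ℝ) 1, x ^ (a-1) * (1-x) ^ (-a) : ℝ) : ℂ) := by
    rw [Complex.betaIntegral, intervalIntegral.integral_of_le zero_le_one,
      ← MeasureTheory.integral_Ioc_eq_integral_Ioo (f := fun x : ℝ => x ^ (a-1) * (1-x) ^ (-a))]
    rw [show ((∫ x in Ioc (0:ℝ) 1, x ^ (a-1) * (1-x) ^ (-a) : ℝ) : ℂ)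
        = ∫ x in Ioc (0:ℝ) 1, ((x ^ (a-1) * (1-x) ^ (-a) : ℝ) : ℂ) from integral_ofReal.symm]
    refine setIntegral_congr_ae measurableSet_Ioc ?_
    filter_upwards [] with x
    intro hx
    rcases eq_or_lt_of_le hx.2 with h1 | h1
    · subst h1
      have e1 : ((1:ℝ):ℂ) = 1 := by norm_num
      rw [e1, show ((1:ℂ) - 1) = 0 by ring, Complex.zero_cpow, show (1:ℝ) - 1 = 0 by ring,
        Real.zero_rpow (by intro h; simp at h; linarith), mul_zero, mul_zero, Complex.ofReal_zero]
      intro h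
      rw [sub_eq_zero] at h
      apply_fun Complex.re at h
      simp at h
      linarith
    · exact key x ⟨hx.1, h1⟩
  -- now compute betaIntegral value
  have hΓ : Complex.betaIntegral (a:ℂ) ((1-a:ℝ):ℂ) = ((π / Real.sin (π * a) : ℝ) : ℂ) := by
    have h := Complex.Gamma_mul_Gamma_eq_betaIntegral (s := (a:ℂ)) (t := ((1-a:ℝ):ℂ))
      (by simpa) (by simpa)
    have hsum : (a:ℂ) + ((1-a:ℝ):ℂ) = 1 := by push_cast; ring
    rw [hsum, Complex.Gamma_one, one_mul] at h
    rw [← h]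
    have hrefl := Complex.Gamma_mul_Gamma_one_sub (a:ℂ)
    have : ((1-a:ℝ):ℂ) = 1 - (a:ℂ) := by push_cast; ring
    rw [this, hrefl]
    rw [Complex.ofReal_div]
    congr 1
    rw [← Complex.ofReal_mul, ← Complex.ofReal_sin]
  rw [hval] at hΓ
  exact_mod_cast hΓ

lemma J (a : ℝ) (ha : 0 < a) (ha1 : a < 1) :
    IntegrableOn (fun t => t ^ (a-1) / (1+t)) (Ioi (0:ℝ)) ∧
    ∫ t in Ioi (0:ℝ), t ^ (a-1) / (1+t) = π / Real.sin (π * a) := by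
  set f : ℝ → ℝ := fun x => x / (1-x) with hf
  set g : ℝ → ℝ := fun t => t ^ (a-1) / (1+t) with hg
  have himg : f '' Ioo (0:ℝ) 1 = Ioi (0:ℝ) := by
    ext t
    constructor
    · rintro ⟨x, hx, rfl⟩
      exact div_pos hx.1 (sub_pos.mpr hx.2)
    · intro ht
      refine ⟨t / (1+t), ⟨div_pos ht (by linarith [mem_Ioi.mp ht]), ?_⟩, ?_⟩
      · rw [div_lt_one (by linarith [mem_Ioi.mp ht])]; linarith [mem_Ioi.mp ht]
      · have h1t : (1:ℝ) + t ≠ 0 := by have := mem_Ioi.mp ht; positivity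
        simp only [hf]
        field_simp
        ring
  have hderiv : ∀ x ∈ Ioo (0:ℝ) 1, HasDerivWithinAt f (((1-x)^2)⁻¹) (Ioo (0:ℝ) 1) x := by
    intro x hx
    have hx1 : (1:ℝ) - x ≠ 0 := by have := hx.2; intro h; linarith [sub_eq_zero.mp h]
    have : HasDerivAt f (((1-x)^2)⁻¹) x := by
      have h := (hasDerivAt_id x).div ((hasDerivAt_const x 1).sub (hasDerivAt_id x)) hx1
      convert h using 1
      · rfl
      · rfl
      · rfl
      · simp only [Pi.sub_apply, id]; ring
    exact this.hasDerivWithinAt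
  have hinj : InjOn f (Ioo (0:ℝ) 1) := by
    intro x hx y hy hxy
    have hx1 : (1:ℝ) - x ≠ 0 := by have := hx.2; intro h; linarith [sub_eq_zero.mp h]
    have hy1 : (1:ℝ) - y ≠ 0 := by have := hy.2; intro h; linarith [sub_eq_zero.mp h]
    simp only [hf] at hxy
    field_simp at hxy
    linarith
  have hpt : ∀ x ∈ Ioo (0:ℝ) 1, |((1-x)^2)⁻¹| • g (f x) = x ^ (a-1) * (1-x) ^ (-a) := by
    intro x hx
    have hx0 : 0 < x := hx.1
    have hx1 : 0 < 1 - x := by linarith [hx.2]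
    have h1f : 1 + f x = (1-x)⁻¹ := by simp only [hf]; field_simp; ring
    have hfx : f x ^ (a-1) = x ^ (a-1) * (1-x) ^ (-(a-1)) := by
      rw [hf, Real.div_rpow hx0.le hx1.le, Real.rpow_neg hx1.le, div_eq_mul_inv]
    rw [smul_eq_mul, abs_of_pos (by positivity), hg]
    simp only
    rw [h1f, hfx]
    have key2 : (1-x) ^ (-a) = (1-x) ^ (-(a-1)) * (1-x) ^ (1:ℝ) * (1-x) ^ (-2:ℝ) := by
      rw [← Real.rpow_add hx1, ← Real.rpow_add hx1]
      ring_nf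
    have h2 : (1-x) ^ (-2:ℝ) = ((1-x)^2)⁻¹ := by
      rw [Real.rpow_neg hx1.le, show ((2:ℝ)) = ((2:ℕ):ℝ) by norm_num, Real.rpow_natCast]
    rw [key2, Real.rpow_one, h2]
    have hne : ((1-x)^2)⁻¹ ≠ 0 := by positivity
    field_simp
  have hii := integrableOn_image_iff_integrableOn_abs_deriv_smul measurableSet_Ioo hderiv hinj g
  rw [himg] at hii
  have haeq : (fun x => |((1-x)^2)⁻¹| • g (f x)) =ᶠ[ae (volume.restrict (Ioo (0:ℝ) 1))]
      (fun x => x ^ (a-1) * (1-x) ^ (-a)) := by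
    filter_upwards [ae_restrict_mem measurableSet_Ioo] with x hx
    exact hpt x hx
  constructor
  · rw [hii]
    exact (beta_real a ha ha1).1.congr haeq.symm
  · rw [← himg, integral_image_eq_integral_abs_deriv_smul measurableSet_Ioo hderiv hinj g,
      integral_congr_ae haeq]
    exact (beta_real a ha ha1).2

lemma K (η b : ℝ) (hη : 2 < η) (hb : 0 < b) :
    IntegrableOn (fun r => b * r ^ (-η) / (1 + b * r ^ (-η)) * r) (Ioi (0:ℝ)) ∧
    ∫ r in Ioi (0:ℝ), b * r ^ (-η) / (1 + b * r ^ (-η)) * r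
      = b ^ (2/η) * π / (η * Real.sin (2 * π / η)) := by
  have hη0 : (0:ℝ) < η := by linarith
  have hηne : η ≠ 0 := ne_of_gt hη0
  set f : ℝ → ℝ := fun r => b * r ^ (-η) / (1 + b * r ^ (-η)) * r with hfdef
  set φ : ℝ → ℝ := fun t => (b * t) ^ (1/η) with hφdef
  set φ' : ℝ → ℝ := fun t => (1/η) * (b * t) ^ (1/η - 1) * b with hφ'def
  have ha : 0 < 2/η := by positivity
  have ha1 : 2/η < 1 := by rw [div_lt_one hη0]; linarith
  have himg : φ '' Ioi (0:ℝ) = Ioi (0:ℝ) := by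
    ext r
    constructor
    · rintro ⟨t, ht, rfl⟩
      exact Real.rpow_pos_of_pos (mul_pos hb ht) _
    · intro hr
      have hr0 : (0:ℝ) < r := hr
      refine ⟨r ^ η / b, div_pos (Real.rpow_pos_of_pos hr0 _) hb, ?_⟩
      simp only [hφdef]
      rw [mul_div_cancel₀ _ (ne_of_gt hb), ← Real.rpow_mul hr0.le, mul_one_div,
        div_self hηne, Real.rpow_one]
  have hderiv : ∀ t ∈ Ioi (0:ℝ), HasDerivWithinAt φ (φ' t) (Ioi (0:ℝ)) t := by
    intro t ht
    have hbt : 0 < b * t := mul_pos hb ht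
    have h : HasDerivAt (fun t => (b * t) ^ (1/η)) ((1/η) * (b * t) ^ (1/η - 1) * b) t := by
      have h1 : HasDerivAt (fun t : ℝ => b * t) b t := by
        simpa using (hasDerivAt_id t).const_mul b
      have h2 := h1.rpow_const (p := 1/η) (Or.inl (ne_of_gt hbt))
      convert h2 using 1
      ring
    exact h.hasDerivWithinAt
  have hinj : InjOn φ (Ioi (0:ℝ)) := by
    intro x hx y hy hxy
    have h := Real.rpow_left_injOn (x := 1/η) (by positivity)
      (mem_setOf.mpr (mul_pos hb hx).le) (mem_setOf.mpr (mul_pos hb hy).le) hxy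
    exact mul_left_cancel₀ (ne_of_gt hb) h
  have hpt : ∀ t ∈ Ioi (0:ℝ), |φ' t| • f (φ t)
      = (b ^ (2/η) / η) * (t ^ (2/η - 1) / (1+t)) := by
    intro t ht
    have ht0 : (0:ℝ) < t := ht
    have hbt : 0 < b * t := mul_pos hb ht0
    have hφpos : 0 < φ t := Real.rpow_pos_of_pos hbt _
    have hφ'pos : 0 < φ' t := by
      simp only [hφ'def]
      have := Real.rpow_pos_of_pos hbt (1/η - 1)
      positivity
    have e1 : (φ t) ^ (-η) = (b * t)⁻¹ := by
      simp only [hφdef]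
      rw [← Real.rpow_mul hbt.le, one_div, show η⁻¹ * -η = -1 by field_simp,
        Real.rpow_neg_one]
    have e2 : b * (b * t)⁻¹ = t⁻¹ := by field_simp
    have e3 : (1:ℝ) + t⁻¹ = (1 + t) / t := by field_simp; ring
    have efrac : b * (φ t) ^ (-η) / (1 + b * (φ t) ^ (-η)) = 1 / (1 + t) := by
      rw [e1, e2, e3]
      have h1t : (1:ℝ) + t ≠ 0 := by positivity
      field_simp
    have ecomb : (b*t) ^ (1/η - 1) * (b*t) ^ (1/η) = b ^ (2/η - 1) * t ^ (2/η - 1) := by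
      rw [← Real.rpow_add hbt, show 1/η - 1 + 1/η = 2/η - 1 by ring,
        Real.mul_rpow hb.le ht0.le]
    have eb : b * b ^ (2/η - 1) = b ^ (2/η) := by
      nth_rewrite 1 [← Real.rpow_one b]
      rw [← Real.rpow_add hb]
      ring_nf
    rw [smul_eq_mul, abs_of_pos hφ'pos, hfdef]
    simp only
    rw [efrac]
    calc φ' t * (1 / (1+t) * φ t)
        = (1/η) * (b * ((b*t) ^ (1/η - 1) * (b*t) ^ (1/η))) * (1/(1+t)) := by
          simp only [hφ'def, hφdef]; ring
      _ = (b ^ (2/η) / η) * (t ^ (2/η - 1) / (1+t)) := by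
          rw [ecomb, ← mul_assoc b, eb]; ring
  have hii := integrableOn_image_iff_integrableOn_abs_deriv_smul measurableSet_Ioi hderiv hinj f
  rw [himg] at hii
  have haeq : (fun t => |φ' t| • f (φ t)) =ᶠ[ae (volume.restrict (Ioi (0:ℝ)))]
      (fun t => (b ^ (2/η) / η) * (t ^ (2/η - 1) / (1+t))) := by
    filter_upwards [ae_restrict_mem measurableSet_Ioi] with t ht
    exact hpt t ht
  have hJ := J (2/η) ha ha1
  constructor
  · rw [hii]
    exact (hJ.1.const_mul _).congr haeq.symm
  · rw [show Ioi (0:ℝ) = φ '' Ioi (0:ℝ) from himg.symm,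
      integral_image_eq_integral_abs_deriv_smul measurableSet_Ioi hderiv hinj f,
      integral_congr_ae haeq, integral_const_mul, hJ.2,
      show π * (2/η) = 2 * π / η by ring, div_mul_div_comm]

theorem stmt_18 (η b d0 d1 : ℝ) (hη : 2 < η) (hb : 0 < b) (hd0 : 0 ≤ d0) (hd : d0 < d1) :
    IntervalIntegrable (fun r => b * r ^ (-η) / (1 + b * r ^ (-η)) * r) volume d0 d1 ∧
    ∫ r in d0..d1, b * r ^ (-η) / (1 + b * r ^ (-η)) * r ≤
      min ((d1 ^ 2 - d0 ^ 2) / 2) (b ^ (2 / η) * π / (η * Real.sin (2 * π / η))) := by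
  have hK := K η b hη hb
  have hsub : Ioc d0 d1 ⊆ Ioi (0:ℝ) := fun x hx => lt_of_le_of_lt hd0 hx.1
  have hInt : IntervalIntegrable (fun r => b * r ^ (-η) / (1 + b * r ^ (-η)) * r) volume d0 d1 := by
    rw [intervalIntegrable_iff_integrableOn_Ioc_of_le hd.le]
    exact hK.1.mono_set hsub
  refine ⟨hInt, le_min ?_ ?_⟩
  · -- bound by ∫ r
    have hle : ∀ x ∈ Icc d0 d1, b * x ^ (-η) / (1 + b * x ^ (-η)) * x ≤ x := by
      intro x hx
      have hx0 : (0:ℝ) ≤ x := le_trans hd0 hx.1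
      have hr : (0:ℝ) ≤ x ^ (-η) := Real.rpow_nonneg hx0 _
      have hden : (0:ℝ) < 1 + b * x ^ (-η) := by positivity
      have hq1 : b * x ^ (-η) / (1 + b * x ^ (-η)) ≤ 1 := by
        rw [div_le_one hden]; linarith
      exact mul_le_of_le_one_left hx0 hq1
    have h := intervalIntegral.integral_mono_on hd.le hInt
      (continuous_id.intervalIntegrable d0 d1) hle
    calc ∫ r in d0..d1, b * r ^ (-η) / (1 + b * r ^ (-η)) * r
        ≤ ∫ r in d0..d1, r := h
      _ = (d1 ^ 2 - d0 ^ 2) / 2 := integral_id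
  · -- bound by improper integral
    have hnn : 0 ≤ᵐ[volume.restrict (Ioi (0:ℝ))]
        (fun r => b * r ^ (-η) / (1 + b * r ^ (-η)) * r) := by
      filter_upwards [ae_restrict_mem measurableSet_Ioi] with x hx
      have hx0 : (0:ℝ) < x := hx
      have hr : (0:ℝ) ≤ x ^ (-η) := Real.rpow_nonneg hx0.le _
      positivity
    calc ∫ r in d0..d1, b * r ^ (-η) / (1 + b * r ^ (-η)) * r
        = ∫ r in Ioc d0 d1, b * r ^ (-η) / (1 + b * r ^ (-η)) * r :=
          intervalIntegral.integral_of_le hd.le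
      _ ≤ ∫ r in Ioi (0:ℝ), b * r ^ (-η) / (1 + b * r ^ (-η)) * r :=
          setIntegral_mono_set hK.1 hnn (HasSubset.Subset.eventuallyLE hsub)
      _ = b ^ (2 / η) * π / (η * Real.sin (2 * π / η)) := hK.2
end
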